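/- arXiv:2508.18068 — 5 statements merged into one kernel-verified Lean document; each statement's English description precedes it below -/
import Mathlib

section
/- Let p be an odd prime with p ≡ 3 (mod 4) and s a positive integer. The quadratic unitary Cayley graph G_{p^s} has eigenvalues λ_a = χ_a(Q_{p^s}) + conj(χ_a(Q_{p^s})) for a ∈ Z_{p^s}, and these satisfy: λ_a = p^{s-1}(p-1) if a = 0; λ_a = -p^{s-1} if a is a nonzero multiple of p^{s-1}; and λ_a = 0 otherwise. In particular, every eigenvalue of G_{p^s} is an integer. -/
open Complex

private lemma aux_geom (n : ℕ) (hn : n ≠ 0) (a : ℕ) :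
    ∑ k ∈ Finset.range n, Complex.exp (2 * Real.pi * Complex.I * ((a * k : ℕ) : ℂ) / n)
      = if n ∣ a then (n : ℂ) else 0 := by
  have hn' : (n : ℂ) ≠ 0 := Nat.cast_ne_zero.mpr hn
  set ζ : ℂ := Complex.exp (2 * Real.pi * Complex.I * a / n) with hζ
  have hzk : ∀ k ∈ Finset.range n,
      Complex.exp (2 * Real.pi * Complex.I * ((a * k : ℕ) : ℂ) / n) = ζ ^ k := by
    intro k _
    rw [hζ, ← Complex.exp_nat_mul]
    congr 1
    push_cast
    ring
  rw [Finset.sum_congr rfl hzk]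
  by_cases hd : n ∣ a
  · obtain ⟨m, rfl⟩ := hd
    have hζ1 : ζ = 1 := by
      rw [hζ, show 2 * Real.pi * Complex.I * ((n * m : ℕ) : ℂ) / n
          = ((m : ℤ) : ℂ) * (2 * Real.pi * Complex.I) by push_cast; field_simp]
      exact Complex.exp_int_mul_two_pi_mul_I m
    simp [hζ1]
  · have hζn : ζ ^ n = 1 := by
      rw [hζ, ← Complex.exp_nat_mul, show (n : ℂ) * (2 * Real.pi * Complex.I * a / n)
          = ((a : ℤ) : ℂ) * (2 * Real.pi * Complex.I) by push_cast; field_simp]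
      exact Complex.exp_int_mul_two_pi_mul_I a
    have hζ1 : ζ ≠ 1 := by
      intro h1
      obtain ⟨k, hk⟩ := Complex.exp_eq_one_iff.mp (hζ ▸ h1)
      apply hd
      have h2 : (a : ℂ) = (k : ℂ) * n := by
        field_simp at hk
        have h3 : (2 : ℂ) * Real.pi * Complex.I ≠ 0 := by
          simp [Real.pi_ne_zero, Complex.I_ne_zero, Complex.ofReal_ne_zero]
        apply mul_left_cancel₀ h3
        linear_combination (2 * Real.pi * Complex.I) * hk
      have h4 : (a : ℤ) = k * n := by exact_mod_cast h2
      exact Int.natCast_dvd_natCast.mp ⟨k, by linarith⟩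
    rw [geom_sum_eq hζ1, hζn, sub_self, zero_div, if_neg hd]

private lemma aux_unit (p s : ℕ) (hp : p.Prime) (hs : 0 < s) [NeZero (p ^ s)]
    (b : ZMod (p ^ s)) : IsUnit b ↔ ¬ p ∣ b.val := by
  conv_lhs => rw [← ZMod.natCast_rightInverse b]
  rw [ZMod.isUnit_iff_coprime, Nat.coprime_pow_right_iff hs, Nat.coprime_comm,
    hp.coprime_iff_not_dvd]

private lemma aux_sq (p s : ℕ) (hp : p.Prime) (hodd : p % 2 = 1) (hs : 0 < s)
    [NeZero (p ^ s)] {x y : ZMod (p ^ s)} (hx : IsUnit x) (h : x ^ 2 = y ^ 2) :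
    x = y ∨ x = -y := by
  have h2 : IsUnit (2 : ZMod (p ^ s)) := by
    rw [show (2 : ZMod (p ^ s)) = ((2 : ℕ) : ZMod (p ^ s)) by push_cast; ring,
      ZMod.isUnit_iff_coprime, Nat.coprime_pow_right_iff hs]
    rw [Nat.coprime_comm, Nat.coprime_two_right, Nat.odd_iff]
    exact hodd
  have hde : (x - y) * (x + y) = 0 := by rw [mul_comm, ← sq_sub_sq, h, sub_self]
  have hsum : IsUnit (x - y + (x + y)) := by
    rw [show x - y + (x + y) = 2 * x by ring]; exact h2.mul hx
  have hone : IsUnit (x - y) ∨ IsUnit (x + y) := by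
    by_contra hcon
    push_neg at hcon
    obtain ⟨h1, h2'⟩ := hcon
    rw [aux_unit p s hp hs] at h1 h2' hsum
    push_neg at h1 h2'
    apply hsum
    rw [ZMod.val_add]
    exact (Nat.dvd_mod_iff (dvd_pow_self p hs.ne')).mpr (Nat.dvd_add h1 h2')
  rcases hone with hu | hu
  · right
    have := (hu.mul_right_eq_zero).mp hde
    linear_combination this
  · left
    rw [mul_comm] at hde
    have := (hu.mul_right_eq_zero).mp hde
    linear_combination this

/-- Eigenvalues of the quadratic unitary Cayley graph `G_{p^s}` for a prime
`p ≡ 3 (mod 4)`: they are `p^{s-1}(p-1)` at `0`, `-p^{s-1}` at nonzero multiples of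
`p^{s-1}`, and `0` elsewhere; in particular they are all integers. -/
theorem stmt_7 (p s : ℕ) (hp : p.Prime) (h3 : p % 4 = 3) (hs : 0 < s) [NeZero (p ^ s)]
    (chi : ZMod (p ^ s) → ℂ)
    (hchi : ∀ a : ZMod (p ^ s), chi a =
      ∑ b ∈ Finset.univ.image (fun u : (ZMod (p ^ s))ˣ => ((u : ZMod (p ^ s)) ^ 2)),
        Complex.exp (2 * Real.pi * Complex.I * (a.val : ℂ) * (b.val : ℂ) / (p ^ s : ℂ)))
    (lam : ZMod (p ^ s) → ℂ)
    (hlam : ∀ a, lam a = chi a + (starRingEnd ℂ) (chi a)) :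
    lam 0 = (p : ℂ) ^ (s - 1) * ((p : ℂ) - 1) ∧
    (∀ a : ZMod (p ^ s), a ≠ 0 → ((p : ZMod (p ^ s)) ^ (s - 1)) ∣ a →
      lam a = -(p : ℂ) ^ (s - 1)) ∧
    (∀ a : ZMod (p ^ s), ¬ ((p : ZMod (p ^ s)) ^ (s - 1)) ∣ a → lam a = 0) ∧
    (∀ a : ZMod (p ^ s), ∃ z : ℤ, lam a = (z : ℂ)) := by
  haveI : Fact p.Prime := ⟨hp⟩
  have hodd : p % 2 = 1 := by omega
  have hn0 : (p ^ s : ℕ) ≠ 0 := NeZero.ne _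
  have hp0 : (p : ℂ) ≠ 0 := Nat.cast_ne_zero.mpr hp.pos.ne'
  set Q : Finset (ZMod (p ^ s)) :=
    Finset.univ.image (fun u : (ZMod (p ^ s))ˣ => ((u : ZMod (p ^ s)) ^ 2)) with hQdef
  set U : Finset (ZMod (p ^ s)) :=
    Finset.univ.image (fun u : (ZMod (p ^ s))ˣ => (u : ZMod (p ^ s))) with hUdef
  set nQ : Finset (ZMod (p ^ s)) := Q.image (fun x => -x) with hnQdef
  have hmemU : ∀ x : ZMod (p ^ s), x ∈ U ↔ IsUnit x := by
    intro x
    simp [hUdef, Finset.mem_image, IsUnit]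
  have hmemQ : ∀ x : ZMod (p ^ s), x ∈ Q ↔ ∃ u : (ZMod (p ^ s))ˣ, (u : ZMod (p ^ s)) ^ 2 = x := by
    intro x; simp [hQdef, Finset.mem_image]
  have hQsub : Q ⊆ U := by
    intro x hx
    obtain ⟨u, rfl⟩ := (hmemQ x).mp hx
    rw [hmemU, ← Units.val_pow_eq_pow_val]
    exact (u ^ 2).isUnit
  have hnQsub : nQ ⊆ U := by
    intro x hx
    obtain ⟨y, hy, rfl⟩ := Finset.mem_image.mp hx
    obtain ⟨u, rfl⟩ := (hmemQ y).mp hy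
    rw [hmemU, ← Units.val_pow_eq_pow_val, ← Units.val_neg]
    exact (-(u ^ 2)).isUnit
  have hdisj : Disjoint Q nQ := by
    rw [Finset.disjoint_left]
    intro x hxQ hxnQ
    obtain ⟨u, hu⟩ := (hmemQ x).mp hxQ
    obtain ⟨y, hy, hyx⟩ := Finset.mem_image.mp hxnQ
    obtain ⟨v, hv⟩ := (hmemQ y).mp hy
    have huv : (u : ZMod (p ^ s)) ^ 2 = -((v : ZMod (p ^ s)) ^ 2) := by
      rw [hu, hv, hyx]
    have key : ((u : ZMod (p ^ s)) * ((v⁻¹ : (ZMod (p ^ s))ˣ) : ZMod (p ^ s))) ^ 2 = -1 := by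
      have h1 : ((u : ZMod (p ^ s)) * ((v⁻¹ : (ZMod (p ^ s))ˣ) : ZMod (p ^ s))) ^ 2
          = -(((v : ZMod (p ^ s)) * ((v⁻¹ : (ZMod (p ^ s))ˣ) : ZMod (p ^ s))) ^ 2) := by
        rw [mul_pow, mul_pow, huv]; ring
      rw [v.mul_inv] at h1
      simpa using h1
    let π := ZMod.castHom (dvd_pow_self p hs.ne') (ZMod p)
    have key2 : (π ((u : ZMod (p ^ s)) * ((v⁻¹ : (ZMod (p ^ s))ˣ) : ZMod (p ^ s)))) ^ 2
        = -1 := by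
      rw [← map_pow, key, map_neg, map_one]
    exact ZMod.exists_sq_eq_neg_one_iff.mp ⟨_, by rw [← sq, key2]⟩ h3
  have hcard : U.card ≤ 2 * Q.card := by
    have hQU : Q = U.image (fun x => x ^ 2) := by
      rw [hUdef, Finset.image_image]
      rfl
    rw [hQU]
    apply Finset.card_le_mul_card_image
    intro b hb
    obtain ⟨x₀, hx₀U, hx₀⟩ := Finset.mem_image.mp hb
    have hsub : U.filter (fun x => x ^ 2 = b) ⊆ {x₀, -x₀} := by
      intro x hx
      obtain ⟨hxU, hx2⟩ := Finset.mem_filter.mp hx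
      have := aux_sq p s hp hodd hs ((hmemU x).mp hxU) (hx2.trans hx₀.symm)
      simpa [Finset.mem_insert, Finset.mem_singleton] using this
    calc (U.filter (fun x => x ^ 2 = b)).card ≤ ({x₀, -x₀} : Finset _).card :=
          Finset.card_le_card hsub
      _ ≤ 2 := (Finset.card_insert_le _ _).trans (by simp)
  have hunion : Q ∪ nQ = U := by
    apply Finset.eq_of_subset_of_card_le (Finset.union_subset hQsub hnQsub)
    rw [Finset.card_union_of_disjoint hdisj, hnQdef,
      Finset.card_image_of_injective _ neg_injective]
    omega
  -- analytic part
  set F : ℤ → ℂ := fun m => Complex.exp (2 * Real.pi * Complex.I * (m : ℂ) / ((p ^ s : ℕ) : ℂ))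
    with hFdef
  have hFcongr : ∀ m m' : ℤ, m ≡ m' [ZMOD (p ^ s : ℕ)] → F m = F m' := by
    intro m m' hmm
    obtain ⟨k, hk⟩ := hmm.dvd
    have hm' : m' = m + (p ^ s : ℕ) * k := by omega
    rw [hFdef]
    simp only
    rw [hm', show 2 * Real.pi * Complex.I * (((m + (p ^ s : ℕ) * k : ℤ)) : ℂ) / ((p ^ s : ℕ) : ℂ)
        = 2 * Real.pi * Complex.I * (m : ℂ) / ((p ^ s : ℕ) : ℂ) + (k : ℂ) * (2 * Real.pi * Complex.I) by
      push_cast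
      have : ((p : ℂ)) ^ s ≠ 0 := pow_ne_zero _ hp0
      field_simp, Complex.exp_add, Complex.exp_int_mul_two_pi_mul_I, mul_one]
  have hFconj : ∀ m : ℤ, (starRingEnd ℂ) (F m) = F (-m) := by
    intro m
    rw [hFdef]
    simp only
    rw [← Complex.exp_conj]
    congr 1
    simp [map_div₀, map_mul, map_ofNat, Complex.conj_I]
  have hterm : ∀ a b : ZMod (p ^ s),
      Complex.exp (2 * Real.pi * Complex.I * (a.val : ℂ) * (b.val : ℂ) / (p ^ s : ℂ))
        = F ((a.val : ℤ) * (b.val : ℤ)) := by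
    intro a b
    rw [hFdef]
    congr 1
    push_cast
    ring
  have hchiF : ∀ a : ZMod (p ^ s), chi a = ∑ b ∈ Q, F ((a.val : ℤ) * (b.val : ℤ)) := by
    intro a
    rw [hchi a]
    exact Finset.sum_congr rfl fun b _ => hterm a b
  have hnegval : ∀ b : ZMod (p ^ s), (((-b).val : ℤ)) ≡ -((b.val : ℤ)) [ZMOD (p ^ s : ℕ)] := by
    intro b
    apply (ZMod.intCast_eq_intCast_iff _ _ _).mp
    push_cast
    simp [ZMod.natCast_val, ZMod.cast_id]
  have hconjchi : ∀ a : ZMod (p ^ s),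
      (starRingEnd ℂ) (chi a) = ∑ b ∈ nQ, F ((a.val : ℤ) * (b.val : ℤ)) := by
    intro a
    rw [hchiF a, map_sum, hnQdef,
      Finset.sum_image (fun x _ y _ h => neg_injective h)]
    refine Finset.sum_congr rfl fun b _ => ?_
    rw [hFconj]
    have hcc : ((a.val : ℤ) * ((-b).val : ℤ)) ≡ -((a.val : ℤ) * ((b.val : ℤ))) [ZMOD (p ^ s : ℕ)] := by
      have h := Int.ModEq.mul_left (a.val : ℤ) (hnegval b)
      simpa [mul_neg] using h
    exact (hFcongr _ _ hcc).symm
  have hlamsum : ∀ a : ZMod (p ^ s), lam a = ∑ b ∈ U, F ((a.val : ℤ) * (b.val : ℤ)) := by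
    intro a
    rw [hlam a, hconjchi a, hchiF a, ← Finset.sum_union hdisj, hunion]
  -- sum over everything
  have hall : ∀ a : ZMod (p ^ s), (∑ b : ZMod (p ^ s), F ((a.val : ℤ) * (b.val : ℤ)))
      = if (p ^ s) ∣ a.val then ((p ^ s : ℕ) : ℂ) else 0 := by
    intro a
    rw [← aux_geom (p ^ s) hn0 a.val]
    refine Finset.sum_nbij' (fun b : ZMod (p ^ s) => b.val) (fun k => (k : ZMod (p ^ s)))
      ?_ ?_ ?_ ?_ ?_
    · intro b _; exact Finset.mem_range.mpr (ZMod.val_lt b)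
    · intro k _; exact Finset.mem_univ _
    · intro b _; exact ZMod.natCast_rightInverse b
    · intro k hk; exact ZMod.val_cast_of_lt (Finset.mem_range.mp hk)
    · intro b _
      rw [hFdef]
      congr 1
  -- sum over nonunits
  have hnon : ∀ a : ZMod (p ^ s),
      (∑ b ∈ Finset.univ.filter (fun b : ZMod (p ^ s) => ¬ IsUnit b), F ((a.val : ℤ) * (b.val : ℤ)))
        = if p ^ (s - 1) ∣ a.val then ((p ^ (s - 1) : ℕ) : ℂ) else 0 := by
    intro a
    set m := p ^ (s - 1) with hm
    have hm0 : m ≠ 0 := pow_ne_zero _ hp.pos.ne'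
    have hpm : p * m = p ^ s := by
      rw [hm, ← pow_succ']
      congr 1
      omega
    have hfe : Finset.univ.filter (fun b : ZMod (p ^ s) => ¬ IsUnit b)
        = (Finset.range m).image (fun k => ((p * k : ℕ) : ZMod (p ^ s))) := by
      ext b
      simp only [Finset.mem_filter, Finset.mem_image, Finset.mem_range, Finset.mem_univ, true_and]
      rw [aux_unit p s hp hs, not_not]
      constructor
      · rintro ⟨k, hk⟩
        refine ⟨k, ?_, ?_⟩
        · have hlt : p * k < p * m := by rw [hpm, ← hk]; exact ZMod.val_lt b
          exact lt_of_mul_lt_mul_left hlt (Nat.zero_le _)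
        · rw [← hk]; exact ZMod.natCast_rightInverse b
      · rintro ⟨k, hk, rfl⟩
        rw [ZMod.val_cast_of_lt (by rw [← hpm]; exact mul_lt_mul_of_pos_left hk hp.pos)]
        exact Dvd.intro k rfl
    have hinj : ∀ x ∈ Finset.range m, ∀ y ∈ Finset.range m,
        ((p * x : ℕ) : ZMod (p ^ s)) = ((p * y : ℕ) : ZMod (p ^ s)) → x = y := by
      intro x hx y hy hxy
      have h1 : p * x = p * y := by
        have e1 := ZMod.val_cast_of_lt (n := p ^ s) (a := p * x)
          (by rw [← hpm]; exact mul_lt_mul_of_pos_left (Finset.mem_range.mp hx) hp.pos)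
        have e2 := ZMod.val_cast_of_lt (n := p ^ s) (a := p * y)
          (by rw [← hpm]; exact mul_lt_mul_of_pos_left (Finset.mem_range.mp hy) hp.pos)
        rw [← e1, ← e2, hxy]
      exact Nat.eq_of_mul_eq_mul_left hp.pos h1
    rw [hfe, Finset.sum_image hinj, ← aux_geom m hm0 a.val]
    refine Finset.sum_congr rfl fun k hk => ?_
    have hval : ((p * k : ℕ) : ZMod (p ^ s)).val = p * k :=
      ZMod.val_cast_of_lt (by rw [← hpm]; exact mul_lt_mul_of_pos_left (Finset.mem_range.mp hk) hp.pos)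
    rw [hFdef]
    simp only [hval]
    congr 1
    have hps : ((p ^ s : ℕ) : ℂ) = (p : ℂ) * ((m : ℕ) : ℂ) := by
      rw [← hpm]; push_cast; ring
    have hmne : ((m : ℕ) : ℂ) ≠ 0 := Nat.cast_ne_zero.mpr hm0
    rw [hps]
    push_cast
    field_simp
  have hUsum : ∀ a : ZMod (p ^ s), (∑ b ∈ U, F ((a.val : ℤ) * (b.val : ℤ)))
      = (if (p ^ s) ∣ a.val then ((p ^ s : ℕ) : ℂ) else 0)
        - (if p ^ (s - 1) ∣ a.val then ((p ^ (s - 1) : ℕ) : ℂ) else 0) := by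
    intro a
    have hUf : U = Finset.univ.filter (fun b : ZMod (p ^ s) => IsUnit b) := by
      ext x; simp [hmemU x]
    have hsplit := Finset.sum_filter_add_sum_filter_not Finset.univ
      (fun b : ZMod (p ^ s) => IsUnit b) (fun b => F ((a.val : ℤ) * (b.val : ℤ)))
    rw [hUf, eq_sub_iff_add_eq, ← hall a, ← hnon a]
    exact hsplit
  have hdvd_iff : ∀ a : ZMod (p ^ s),
      ((p : ZMod (p ^ s)) ^ (s - 1)) ∣ a ↔ p ^ (s - 1) ∣ a.val := by
    intro a
    constructor
    · rintro ⟨c, hc⟩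
      have hc' : a = ((p ^ (s - 1) * c.val : ℕ) : ZMod (p ^ s)) := by
        rw [hc]
        push_cast
        rw [ZMod.natCast_rightInverse c]
      have : a.val = (p ^ (s - 1) * c.val) % (p ^ s) := by rw [hc', ZMod.val_natCast]
      rw [this]
      exact (Nat.dvd_mod_iff (pow_dvd_pow p (by omega))).mpr ⟨c.val, rfl⟩
    · rintro ⟨k, hk⟩
      refine ⟨((k : ℕ) : ZMod (p ^ s)), ?_⟩
      conv_lhs => rw [← ZMod.natCast_rightInverse a]
      rw [hk]
      push_cast
      ring
  -- final results
  have hps_c : (p : ℂ) ^ s = (p : ℂ) ^ (s - 1) * p := by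
    rw [← pow_succ]
    congr 1
    omega
  have h1 : lam 0 = (p : ℂ) ^ (s - 1) * ((p : ℂ) - 1) := by
    rw [hlamsum 0, hUsum 0]
    simp only [ZMod.val_zero, dvd_zero, if_pos]
    push_cast
    rw [hps_c]
    ring
  have h2 : ∀ a : ZMod (p ^ s), a ≠ 0 → ((p : ZMod (p ^ s)) ^ (s - 1)) ∣ a →
      lam a = -(p : ℂ) ^ (s - 1) := by
    intro a ha hdvd
    have hnd : ¬ (p ^ s) ∣ a.val := by
      intro h
      exact ha (ZMod.val_eq_zero a |>.mp (Nat.eq_zero_of_dvd_of_lt h (ZMod.val_lt a)))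
    rw [hlamsum a, hUsum a, if_neg hnd, if_pos ((hdvd_iff a).mp hdvd)]
    push_cast
    ring
  have h3' : ∀ a : ZMod (p ^ s), ¬ ((p : ZMod (p ^ s)) ^ (s - 1)) ∣ a → lam a = 0 := by
    intro a hnd
    have hnd1 : ¬ p ^ (s - 1) ∣ a.val := fun h => hnd ((hdvd_iff a).mpr h)
    have hnd2 : ¬ (p ^ s) ∣ a.val := fun h => hnd1 ((pow_dvd_pow p (by omega)).trans h)
    rw [hlamsum a, hUsum a, if_neg hnd2, if_neg hnd1, sub_zero]
  refine ⟨h1, h2, h3', ?_⟩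
  intro a
  by_cases h0 : ((p : ZMod (p ^ s)) ^ (s - 1)) ∣ a
  · by_cases ha : a = 0
    · exact ⟨(p : ℤ) ^ (s - 1) * ((p : ℤ) - 1), by rw [ha, h1]; push_cast; ring⟩
    · exact ⟨-((p : ℤ) ^ (s - 1)), by rw [h2 a ha h0]; push_cast; ring⟩
  · exact ⟨0, by rw [h3' a h0]; simp⟩
end

section
/- Let p be an odd prime, k a positive integer, and a ∈ Z_{p^k} an element that is not a multiple of p^{k-1}. Then the character sum χ_a(Q_{p^k}) = Σ_{b ∈ Q_{p^k}} exp(2πi·ab/p^k) equals 0. -/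
open Complex

lemma aux_sq_s9 (p k : ℕ) (hp : p.Prime) (hodd : Odd p) (hk : k ≠ 0) (x : ZMod (p^k))
    (hx : (ZMod.castHom (dvd_pow_self p hk) (ZMod p)) x = 1) :
    ∃ w : (ZMod (p^k))ˣ, (w : ZMod (p^k))^2 = x := by
  haveI : Fact p.Prime := ⟨hp⟩
  haveI : NeZero (p^k) := ⟨pow_ne_zero _ hp.ne_zero⟩
  set φ := ZMod.castHom (dvd_pow_self p hk) (ZMod p) with hφ
  have happ : ∀ z : ZMod (p^k), φ z = ((z.val : ℕ) : ZMod p) := by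
    intro z
    rw [hφ, ZMod.castHom_apply, ← ZMod.natCast_val]
  have hunit : ∀ z : ZMod (p^k), φ z ≠ 0 → IsUnit z := by
    intro z hz
    have h2 : ¬ p ∣ z.val := by
      intro hd
      exact hz (by rw [happ, ZMod.natCast_eq_zero_iff]; exact hd)
    have h3 : IsUnit ((z.val : ℕ) : ZMod (p^k)) := by
      rw [ZMod.isUnit_iff_coprime]
      exact Nat.Coprime.pow_right k ((hp.coprime_iff_not_dvd.2 h2).symm)
    rwa [ZMod.natCast_val, ZMod.cast_id] at h3
  classical
  set F : Finset (ZMod (p^k)) := Finset.univ.filter (fun z => φ z = 1) with hF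
  have hinj : Set.InjOn (fun z : ZMod (p^k) => z^2) F := by
    intro u hu v hv huv
    simp only [hF, Finset.coe_filter, Set.mem_setOf_eq] at hu hv
    have hsum : IsUnit (u + v) := by
      apply hunit
      rw [map_add, hu.2, hv.2]
      intro h
      have h2 : (2 : ZMod p) = 0 := by linear_combination h
      rw [show ((2:ZMod p)) = ((2:ℕ) : ZMod p) by norm_num,
        ZMod.natCast_eq_zero_iff] at h2
      rcases (Nat.prime_dvd_prime_iff_eq hp Nat.prime_two).1 h2 with rfl
      exact absurd hodd (by decide)
    have : (u + v) * (u - v) = 0 := by ring_nf; linear_combination huv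
    have := hsum.mul_right_eq_zero.1 this
    exact sub_eq_zero.1 this
  have himg : Finset.image (fun z : ZMod (p^k) => z^2) F ⊆ F := by
    intro z hz
    rw [Finset.mem_image] at hz
    obtain ⟨w, hw, rfl⟩ := hz
    simp only [hF, Finset.mem_filter] at hw ⊢
    refine ⟨Finset.mem_univ _, ?_⟩
    rw [map_pow, hw.2, one_pow]
  have heq : Finset.image (fun z : ZMod (p^k) => z^2) F = F :=
    Finset.eq_of_subset_of_card_le himg
      (le_of_eq (Finset.card_image_of_injOn hinj).symm)
  have hxF : x ∈ F := by simp [hF, hx]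
  rw [← heq, Finset.mem_image] at hxF
  obtain ⟨w, hwF, hw2⟩ := hxF
  have hwu : IsUnit w := by
    apply hunit
    simp only [hF, Finset.mem_filter] at hwF
    rw [hwF.2]
    exact one_ne_zero
  exact ⟨hwu.unit, by rw [IsUnit.unit_spec]; exact hw2⟩
open Complex

lemma aux_geom_s9 (M : ℕ) [NeZero M] (ξ : ℂ) (h1 : ξ ≠ 1) (hM1 : ξ^M = 1) :
    ∑ y : ZMod M, ξ^(y.val) = 0 := by

  have : ∑ y : ZMod M, ξ^(y.val) = ∑ i ∈ Finset.range M, ξ^i := by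
    apply Finset.sum_nbij' (fun y : ZMod M => y.val) (fun i : ℕ => (i : ZMod M))
    · intro y _; exact Finset.mem_range.2 (ZMod.val_lt y)
    · intro i _; exact Finset.mem_univ _
    · intro y _; rw [ZMod.natCast_val, ZMod.cast_id]
    · intro i hi; exact ZMod.val_cast_of_lt (Finset.mem_range.1 hi)
    · intro y _; rfl
  rw [this, geom_sum_eq h1 M, hM1, sub_self, zero_div]
/-- If `a ∈ Z_{p^k}` is not a multiple of `p^{k-1}`, then `χ_a(Q_{p^k}) = 0`. -/
theorem stmt_9 (p k : ℕ) (hp : p.Prime) (hodd : Odd p) (hk : 0 < k) [NeZero (p ^ k)]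
    (a : ZMod (p ^ k)) (ha : ¬ ((p : ZMod (p ^ k)) ^ (k - 1)) ∣ a) :
    (∑ b ∈ Finset.univ.image (fun u : (ZMod (p ^ k))ˣ => ((u : ZMod (p ^ k)) ^ 2)),
        Complex.exp (2 * Real.pi * Complex.I * (a.val : ℂ) * (b.val : ℂ) / (p ^ k : ℂ))) = 0 := by
  haveI : Fact p.Prime := ⟨hp⟩
  classical
  obtain ⟨n, rfl⟩ : ∃ n, k = n + 1 := ⟨k - 1, (Nat.succ_pred_eq_of_pos hk).symm⟩
  rcases Nat.eq_zero_or_pos n with rfl | hn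
  · exact absurd (one_dvd a) (by simpa using ha)
  set M := p ^ n with hMdef
  haveI : NeZero M := ⟨pow_ne_zero _ hp.ne_zero⟩
  have hN0 : p ^ (n + 1) ≠ 0 := pow_ne_zero _ hp.ne_zero
  have hNM : p ^ (n + 1) = p * M := by rw [hMdef, pow_succ]; ring
  set ζ : ℂ := Complex.exp (2 * Real.pi * Complex.I / (p ^ (n + 1) : ℕ)) with hζdef
  have hζ : IsPrimitiveRoot ζ (p ^ (n + 1)) := Complex.isPrimitiveRoot_exp _ hN0
  have hζN : ζ ^ (p ^ (n + 1)) = 1 := hζ.pow_eq_one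
  have hmod : ∀ m : ℕ, ζ ^ m = ζ ^ (m % (p ^ (n + 1))) := by
    intro m
    conv_lhs => rw [← Nat.div_add_mod m (p ^ (n + 1))]
    rw [pow_add, pow_mul, hζN, one_pow, one_mul]
  have hpow : ∀ m₁ m₂ : ℕ, ((m₁ : ZMod (p ^ (n + 1))) = (m₂ : ZMod (p ^ (n + 1)))) →
      ζ ^ m₁ = ζ ^ m₂ := by
    intro m₁ m₂ h
    rw [ZMod.natCast_eq_natCast_iff] at h
    rw [hmod m₁, hmod m₂, h]
  set Q : Finset (ZMod (p ^ (n + 1))) :=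
    Finset.univ.image (fun u : (ZMod (p ^ (n + 1)))ˣ => ((u : ZMod (p ^ (n + 1))) ^ 2)) with hQdef
  set g : ZMod (p ^ (n + 1)) → ℂ := fun b => ζ ^ (a.val * b.val) with hgdef
  have hterm : ∀ b : ZMod (p ^ (n + 1)),
      Complex.exp (2 * Real.pi * Complex.I * (a.val : ℂ) * (b.val : ℂ) / ((p : ℂ) ^ (n + 1)))
        = g b := by
    intro b
    rw [hgdef]
    simp only
    rw [hζdef, ← Complex.exp_nat_mul]
    congr 1
    have h0 : ((p ^ (n + 1) : ℕ) : ℂ) ≠ 0 := Nat.cast_ne_zero.2 hN0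
    have hp0 : (p : ℂ) ≠ 0 := Nat.cast_ne_zero.2 hp.ne_zero
    field_simp
    push_cast
    ring
  rw [Finset.sum_congr rfl (fun b _ => hterm b)]
  set h : ZMod M → ZMod (p ^ (n + 1)) :=
    fun y => 1 + (p : ZMod (p ^ (n + 1))) * ((y.val : ℕ) : ZMod (p ^ (n + 1))) with hhdef
  have hy_sq : ∀ y : ZMod M, ∃ w : (ZMod (p ^ (n + 1)))ˣ, (w : ZMod (p ^ (n + 1))) ^ 2 = h y := by
    intro y
    apply aux_sq_s9 p (n + 1) hp hodd (Nat.succ_ne_zero n)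
    rw [hhdef]
    simp only
    rw [map_add, map_one, map_mul, map_natCast, ZMod.natCast_self, zero_mul, add_zero]
  have step1 : ∀ y : ZMod M, ∑ b ∈ Q, g b = ∑ b ∈ Q, g (h y * b) := by
    intro y
    obtain ⟨w, hw⟩ := hy_sq y
    have hw' : ((w ^ 2 : (ZMod (p ^ (n + 1)))ˣ) : ZMod (p ^ (n + 1))) = h y := by
      rw [Units.val_pow_eq_pow_val]; exact hw
    apply Finset.sum_nbij' (fun b => ((w⁻¹ ^ 2 : (ZMod (p ^ (n + 1)))ˣ) : ZMod (p ^ (n + 1))) * b)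
      (fun b => ((w ^ 2 : (ZMod (p ^ (n + 1)))ˣ) : ZMod (p ^ (n + 1))) * b)
    · intro b hb
      rw [hQdef, Finset.mem_image] at hb ⊢
      obtain ⟨u, _, rfl⟩ := hb
      exact ⟨w⁻¹ * u, Finset.mem_univ _, by rw [Units.val_mul, mul_pow, Units.val_pow_eq_pow_val]⟩
    · intro b hb
      rw [hQdef, Finset.mem_image] at hb ⊢
      obtain ⟨u, _, rfl⟩ := hb
      exact ⟨w * u, Finset.mem_univ _, by rw [Units.val_mul, mul_pow, Units.val_pow_eq_pow_val]⟩
    · intro b _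
      rw [← mul_assoc, ← Units.val_mul]
      norm_num
    · intro b _
      rw [← mul_assoc, ← Units.val_mul]
      norm_num
    · intro b _
      rw [← hw', ← mul_assoc, ← Units.val_mul]
      norm_num
  have step2 : ∀ b ∈ Q, ∑ y : ZMod M, g (h y * b) = 0 := by
    intro b hb
    rw [hQdef, Finset.mem_image] at hb
    obtain ⟨u, _, rfl⟩ := hb
    set c : ZMod (p ^ (n + 1)) := a * ((u : ZMod (p ^ (n + 1))) ^ 2) with hcdef
    have hMc : ¬ (M : ℕ) ∣ c.val := by
      intro hd
      obtain ⟨t, ht⟩ := hd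
      apply ha
      have hc : c = ((M : ℕ) : ZMod (p ^ (n + 1))) * ((t : ℕ) : ZMod (p ^ (n + 1))) := by
        rw [← Nat.cast_mul, ← ht, ZMod.natCast_val, ZMod.cast_id]
      have haeq : a = ((M : ℕ) : ZMod (p ^ (n + 1))) *
          (((t : ℕ) : ZMod (p ^ (n + 1))) * ((u⁻¹ : (ZMod (p ^ (n + 1)))ˣ) : ZMod (p ^ (n + 1))) ^ 2) := by
        have h1 : a = c * ((u⁻¹ : (ZMod (p ^ (n + 1)))ˣ) : ZMod (p ^ (n + 1))) ^ 2 := by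
          rw [hcdef, mul_assoc, ← mul_pow, ← Units.val_mul]
          norm_num
        rw [h1, hc]; ring
      rw [show (n + 1) - 1 = n from rfl]
      refine ⟨((t : ZMod (p ^ (n + 1))) *
        ((u⁻¹ : (ZMod (p ^ (n + 1)))ˣ) : ZMod (p ^ (n + 1))) ^ 2), ?_⟩
      rw [haeq]
      congr 1
      rw [hMdef]
      push_cast
      ring
    have hexp : ∀ y : ZMod M, g (h y * ((u : ZMod (p ^ (n + 1))) ^ 2))
        = ζ ^ (c.val) * (ζ ^ (p * c.val)) ^ (y.val) := by
      intro y
      rw [hgdef]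
      simp only
      rw [← pow_mul, ← pow_add]
      apply hpow
      push_cast [ZMod.natCast_val, ZMod.cast_id, hhdef, hcdef]
      ring
    rw [Finset.sum_congr rfl (fun y _ => hexp y), ← Finset.mul_sum]
    have hxi1 : ζ ^ (p * c.val) ≠ 1 := by
      intro hcon
      rw [hζ.pow_eq_one_iff_dvd] at hcon
      have h2 : p * M ∣ p * c.val := by rw [← hNM]; exact hcon
      exact hMc ((mul_dvd_mul_iff_left hp.pos.ne').1 h2)
    have hxiM : (ζ ^ (p * c.val)) ^ M = 1 := by
      have he : p * c.val * M = p ^ (n + 1) * c.val := by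
        generalize c.val = v
        rw [hNM]; ring
      rw [← pow_mul, he, pow_mul, hζN, one_pow]
    rw [aux_geom_s9 M _ hxi1 hxiM, mul_zero]
  have main : (M : ℂ) * ∑ b ∈ Q, g b = 0 := by
    calc (M : ℂ) * ∑ b ∈ Q, g b = ∑ _y : ZMod M, ∑ b ∈ Q, g b := by
          rw [Finset.sum_const, Finset.card_univ, ZMod.card, nsmul_eq_mul]
      _ = ∑ y : ZMod M, ∑ b ∈ Q, g (h y * b) := Finset.sum_congr rfl (fun y _ => step1 y)
      _ = ∑ b ∈ Q, ∑ y : ZMod M, g (h y * b) := Finset.sum_comm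
      _ = 0 := Finset.sum_eq_zero step2
  have hM0 : (M : ℂ) ≠ 0 := Nat.cast_ne_zero.2 (pow_ne_zero _ hp.ne_zero)
  exact (mul_eq_zero.1 main).resolve_left hM0
end

section
/- For k > 2 and a ∈ Z_{2^k} with a ∉ {0, 2^{k-3}, 2^{k-2}, 3·2^{k-3}, 2^{k-1}, 5·2^{k-3}, 3·2^{k-2}, 7·2^{k-3}}, the character sum χ_a(Q_{2^k}) = Σ_{b ∈ Q_{2^k}} exp(2πi·ab/2^k) equals 0. -/
open Complex

lemma exists_sqrt' (x : ℕ) (hx : x % 8 = 1) :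
    ∀ k, 3 ≤ k → ∃ y : ℤ, Odd y ∧ (2^k : ℤ) ∣ y^2 - x := by
  intro k hk
  induction k, hk using Nat.le_induction with
  | base =>
    refine ⟨1, odd_one, ⟨-((x/8 : ℕ) : ℤ), ?_⟩⟩
    obtain ⟨m, hm⟩ : ∃ m, x = 8*m+1 := ⟨x/8, by omega⟩
    rw [hm]
    have : (8*m+1)/8 = m := by omega
    rw [this]; push_cast; ring
  | succ k hk ih =>
    obtain ⟨j, rfl⟩ : ∃ j, k = j + 3 := ⟨k-3, by omega⟩
    obtain ⟨y, ⟨d, rfl⟩, c, hc⟩ := ih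
    refine ⟨(2*d+1) + 2^(j+2)*c, ⟨d + 2^(j+1)*c, by ring⟩, c*(d+1) + 2^j*c^2, ?_⟩
    have h1 : ((2*d+1) + 2^(j+2)*c)^2 - (x:ℤ)
        = ((2*d+1)^2 - x) + 2^(j+3)*((2*d+1)*c) + 2^(2*j+4)*c^2 := by ring
    rw [h1, hc]; ring

lemma sq_mod_eight (n : ℕ) (hn : n % 2 = 1) : n * n % 8 = 1 := by
  have h := Nat.mul_mod n n 8
  have h2 : n % 8 = 1 ∨ n % 8 = 3 ∨ n % 8 = 5 ∨ n % 8 = 7 := by omega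
  rcases h2 with h2 | h2 | h2 | h2 <;> rw [h2] at h <;> omega

lemma mem_sq_image (k : ℕ) (hk : 3 ≤ k) (b : ZMod (2^k)) :
    (b ∈ Finset.univ.image (fun u : (ZMod (2^k))ˣ => ((u : ZMod (2^k)) ^ 2))) ↔ b.val % 8 = 1 := by
  haveI : NeZero (2^k) := ⟨by positivity⟩
  have h8 : (8 : ℕ) ∣ 2^k := by
    have : (8:ℕ) = 2^3 := by norm_num
    rw [this]; exact pow_dvd_pow 2 hk
  constructor
  · intro hb
    obtain ⟨u, -, rfl⟩ := Finset.mem_image.mp hb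
    rw [sq, ZMod.val_mul, Nat.mod_mod_of_dvd _ h8]
    apply sq_mod_eight
    have hcop : Nat.Coprime ((u : ZMod (2^k)).val) (2^k) := ZMod.val_coe_unit_coprime u
    have hcop2 : Nat.Coprime ((u : ZMod (2^k)).val) 2 :=
      Nat.Coprime.coprime_dvd_right (dvd_pow_self 2 (by omega)) hcop
    have := Nat.coprime_two_right.mp hcop2
    rwa [Nat.odd_iff] at this
  · intro hb
    obtain ⟨y, -, hdvd⟩ := exists_sqrt' b.val hb k hk
    set u0 : ZMod (2^k) := (y : ZMod (2^k)) with hu0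
    have hsq : u0^2 = b := by
      have : ((y^2 - (b.val : ℤ) : ℤ) : ZMod (2^k)) = 0 := by
        rw [ZMod.intCast_zmod_eq_zero_iff_dvd]
        exact_mod_cast hdvd
      push_cast at this
      have hval : ((b.val : ℕ) : ZMod (2^k)) = b := ZMod.natCast_rightInverse b
      rw [sub_eq_zero] at this
      rw [hu0]
      rw [this]
      exact_mod_cast hval
    have hodd : u0.val % 2 = 1 := by
      by_contra h
      have h0 : u0.val % 2 = 0 := by omega
      have hbv : b.val = u0.val * u0.val % 2^k := by rw [← hsq, sq, ZMod.val_mul]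
      have h2 : (2:ℕ) ∣ 2^k := dvd_pow_self 2 (by omega)
      have : b.val % 2 = u0.val * u0.val % 2 := by rw [hbv, Nat.mod_mod_of_dvd _ h2]
      have hm := Nat.mul_mod u0.val u0.val 2
      rw [h0] at hm
      simp at hm
      omega
    have hunit : IsUnit u0 := by
      have hcop : Nat.Coprime u0.val (2^k) :=
        Nat.Coprime.pow_right _ (by rwa [Nat.coprime_two_right, Nat.odd_iff])
      have := (ZMod.isUnit_iff_coprime u0.val (2^k)).mpr hcop
      rwa [ZMod.natCast_rightInverse u0] at this
    refine Finset.mem_image.mpr ⟨hunit.unit, Finset.mem_univ _, ?_⟩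
    rw [IsUnit.unit_spec, hsq]

/-- For `k > 2` and `a` outside the eight exceptional residues, `χ_a(Q_{2^k}) = 0`. -/
theorem stmt_10 (k : ℕ) (hk : 2 < k) (a : ZMod (2 ^ k))
    (ha : a ∉ ({(0 : ZMod (2 ^ k)), ((2 ^ (k - 3) : ℕ) : ZMod (2 ^ k)),
        ((2 ^ (k - 2) : ℕ) : ZMod (2 ^ k)), ((3 * 2 ^ (k - 3) : ℕ) : ZMod (2 ^ k)),
        ((2 ^ (k - 1) : ℕ) : ZMod (2 ^ k)), ((5 * 2 ^ (k - 3) : ℕ) : ZMod (2 ^ k)),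
        ((3 * 2 ^ (k - 2) : ℕ) : ZMod (2 ^ k)), ((7 * 2 ^ (k - 3) : ℕ) : ZMod (2 ^ k))} :
        Set (ZMod (2 ^ k)))) :
    (∑ b ∈ Finset.univ.image (fun u : (ZMod (2 ^ k))ˣ => ((u : ZMod (2 ^ k)) ^ 2)),
        Complex.exp (2 * Real.pi * Complex.I * (a.val : ℂ) * (b.val : ℂ) / (2 ^ k : ℂ))) = 0 := by
  haveI : NeZero (2^k) := ⟨by positivity⟩
  have hk3 : 3 ≤ k := hk
  set N : ℕ := 2^(k-3) with hN
  have h8N : (2:ℕ)^k = 8 * N := by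
    rw [hN, show k = 3 + (k-3) by omega, pow_add]
    norm_num
  have hNpos : 0 < N := by positivity
  have h2N : (2:ℕ)^(k-2) = 2 * N := by
    rw [hN, show k - 2 = (k-3) + 1 by omega, pow_succ]; ring
  have h4N : (2:ℕ)^(k-1) = 4 * N := by
    rw [hN, show k - 1 = (k-3) + 2 by omega, pow_add]; ring
  have hNC : (N:ℂ) ≠ 0 := Nat.cast_ne_zero.mpr (by positivity)
  have h8NC : (2:ℂ)^k = 8 * (N:ℂ) := by exact_mod_cast congrArg (Nat.cast (R := ℂ)) h8N
  have hva : ∀ b : ZMod (2^k), ((b.val : ℕ) : ZMod (2^k)) = b :=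
    fun b => ZMod.natCast_rightInverse b
  simp only [Set.mem_insert_iff, Set.mem_singleton_iff, not_or] at ha
  obtain ⟨ha0, ha1, ha2, ha3, ha4, ha5, ha6, ha7⟩ := ha
  -- z ≠ 1
  have h2piI : (2:ℂ) * Real.pi * Complex.I ≠ 0 := by
    refine mul_ne_zero (mul_ne_zero two_ne_zero ?_) Complex.I_ne_zero
    exact_mod_cast Real.pi_ne_zero
  have hz1 : Complex.exp (2 * Real.pi * Complex.I * (a.val:ℂ) / N) ≠ 1 := by
    intro h
    rw [Complex.exp_eq_one_iff] at h
    obtain ⟨n, hn⟩ := h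
    rw [div_eq_iff hNC] at hn
    have h3 : (2:ℂ)*Real.pi*Complex.I*(a.val:ℂ) = 2*Real.pi*Complex.I*(n*N) := by
      linear_combination hn
    have h4 : (a.val:ℂ) = (n:ℂ)*(N:ℂ) := mul_left_cancel₀ h2piI h3
    have h5 : (a.val:ℤ) = n * (N:ℤ) := by exact_mod_cast h4
    have h6 : N ∣ a.val := by
      have : (N:ℤ) ∣ (a.val:ℤ) := ⟨n, by rw [h5]; ring⟩
      exact_mod_cast this
    obtain ⟨j, hj⟩ := h6
    have hv : a.val < 8*N := by
      calc a.val < 2^k := a.val_lt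
        _ = 8*N := h8N
    have hjlt : j < 8 := by
      by_contra hc
      push_neg at hc
      have : N*8 ≤ N*j := Nat.mul_le_mul_left N hc
      omega
    have key : ∀ m : ℕ, a.val = m → a = ((m:ℕ) : ZMod (2^k)) := by
      intro m hm; rw [← hva a, hm]
    interval_cases j
    · exact ha0 (by rw [← hva a, hj]; simp)
    · exact ha1 (by rw [← hva a, hj]; norm_num)
    · exact ha2 (key _ (by rw [hj, h2N]; ring))
    · exact ha3 (key _ (by rw [hj]; ring))
    · exact ha4 (key _ (by rw [hj, h4N]; ring))
    · exact ha5 (key _ (by rw [hj]; ring))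
    · exact ha6 (key _ (by rw [hj, h2N]; ring))
    · exact ha7 (key _ (by rw [hj]; ring))
  -- rewrite image as image of arithmetic progression
  have himg : Finset.univ.image (fun u : (ZMod (2^k))ˣ => ((u : ZMod (2^k)) ^ 2))
      = (Finset.range N).image (fun t => ((8*t+1 : ℕ) : ZMod (2^k))) := by
    ext b
    rw [mem_sq_image k hk3 b, Finset.mem_image]
    constructor
    · intro hb
      refine ⟨b.val / 8, Finset.mem_range.mpr ?_, ?_⟩
      · have hv : b.val < 8*N := by
          calc b.val < 2^k := b.val_lt
            _ = 8*N := h8N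
        omega
      · rw [show 8 * (b.val/8) + 1 = b.val by omega, hva]
    · rintro ⟨t, ht, rfl⟩
      rw [Finset.mem_range] at ht
      rw [ZMod.val_cast_of_lt (by rw [h8N]; omega)]
      omega
  rw [himg, Finset.sum_image (by
    intro x hx y hy hxy
    rw [Finset.mem_coe, Finset.mem_range] at hx hy
    have hx' := ZMod.val_cast_of_lt (n := 2^k) (a := 8*x+1) (by rw [h8N]; omega)
    have hy' := ZMod.val_cast_of_lt (n := 2^k) (a := 8*y+1) (by rw [h8N]; omega)
    have := congrArg ZMod.val hxy
    rw [hx', hy'] at this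
    omega)]
  have hterm : ∀ t ∈ Finset.range N,
      Complex.exp (2 * Real.pi * Complex.I * (a.val : ℂ) * ((((8*t+1 : ℕ) : ZMod (2^k)).val : ℕ) : ℂ) / (2 ^ k : ℂ))
      = Complex.exp (2 * Real.pi * Complex.I * (a.val:ℂ) / (2^k : ℂ))
        * Complex.exp (2 * Real.pi * Complex.I * (a.val:ℂ) / N) ^ t := by
    intro t ht
    rw [Finset.mem_range] at ht
    rw [ZMod.val_cast_of_lt (by rw [h8N]; omega), ← Complex.exp_nat_mul, ← Complex.exp_add]
    congr 1
    rw [h8NC]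
    push_cast
    field_simp
    ring
  rw [Finset.sum_congr rfl hterm, ← Finset.mul_sum, geom_sum_eq hz1]
  have hzN : Complex.exp (2 * Real.pi * Complex.I * (a.val:ℂ) / N) ^ N = 1 := by
    rw [← Complex.exp_nat_mul]
    have harg : (N:ℂ) * (2 * Real.pi * Complex.I * (a.val:ℂ) / N) = (a.val:ℂ) * (2 * Real.pi * Complex.I) := by
      field_simp
    rw [harg]
    exact_mod_cast Complex.exp_int_mul_two_pi_mul_I (a.val : ℤ)
  rw [hzN]
  simp
end

section
/- Let h > 2 and n = 2^h. The quadratic unitary Cayley graph G_n has an irrational eigenvalue; specifically, the eigenvalue indexed by a = 2^{h-3}, namely χ_a(Q_{2^h}) + conj(χ_a(Q_{2^h})), equals 2^h/(4√2). Consequently G_{2^h} is not integral for h > 2. -/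
open Complex


lemma odd_sq_mod_eight {k : ℕ} (hk : k % 2 = 1) : k * k % 8 = 1 := by
  have h1 : k % 8 % 2 = k % 2 := Nat.mod_mod_of_dvd k (by norm_num)
  have h2 : k * k % 8 = (k % 8) * (k % 8) % 8 := Nat.mul_mod k k 8
  have hlt : k % 8 < 8 := Nat.mod_lt _ (by norm_num)
  have : k % 8 = 1 ∨ k % 8 = 3 ∨ k % 8 = 5 ∨ k % 8 = 7 := by omega
  rcases this with h | h | h | h <;> rw [h] at h2 <;> omega

lemma unit_val_odd (h : ℕ) (hh : 3 ≤ h) (u : (ZMod (2 ^ h))ˣ) :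
    (u : ZMod (2 ^ h)).val % 2 = 1 := by
  have hc : Nat.Coprime (u : ZMod (2 ^ h)).val (2 ^ h) := ZMod.val_coe_unit_coprime u
  have h2 : Nat.Coprime (u : ZMod (2 ^ h)).val 2 :=
    Nat.Coprime.coprime_dvd_right (dvd_pow_self 2 (by omega)) hc
  have := (Nat.Prime.coprime_iff_not_dvd Nat.prime_two).mp h2.symm
  omega

lemma sq_unit_val_mod_eight (h : ℕ) (hh : 3 ≤ h) (u : (ZMod (2 ^ h))ˣ) :
    (((u : ZMod (2 ^ h))) ^ 2).val % 8 = 1 := by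
  have h8 : (8 : ℕ) ∣ 2 ^ h := by
    calc (8:ℕ) = 2 ^ 3 := by norm_num
    _ ∣ 2 ^ h := pow_dvd_pow 2 hh
  rw [sq, ZMod.val_mul, Nat.mod_mod_of_dvd _ h8]
  exact odd_sq_mod_eight (unit_val_odd h hh u)


lemma sq_eq_one_iff' (h : ℕ) (hh : 3 ≤ h) (y : ZMod (2 ^ h)) :
    y ^ 2 = 1 ↔ y = 1 ∨ y = -1 ∨
      y = ((2 ^ (h - 1) : ℕ) : ZMod (2 ^ h)) + 1 ∨
      y = ((2 ^ (h - 1) : ℕ) : ZMod (2 ^ h)) - 1 := by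
  haveI : NeZero (2 ^ h) := ⟨by positivity⟩
  haveI : Fact (1 < 2 ^ h) := ⟨by
    have : 2 ^ 1 ≤ 2 ^ h := Nat.pow_le_pow_right (by norm_num) (by omega)
    omega⟩
  have hcast : ((2 ^ (h - 1) : ℕ) : ZMod (2 ^ h)) = (2 : ZMod (2 ^ h)) ^ (h - 1) := by
    push_cast; rfl
  have hz : (2 : ZMod (2 ^ h)) ^ h = 0 := by
    have := ZMod.natCast_self (2 ^ h); push_cast at this; exact this
  have hzz : (2 : ZMod (2 ^ h)) ^ (h - 1) * 2 ^ (h - 1) = 0 := by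
    rw [← pow_add, show h - 1 + (h - 1) = h + (h - 2) by omega, pow_add, hz, zero_mul]
  have hz2 : (2 : ZMod (2 ^ h)) * 2 ^ (h - 1) = 0 := by
    rw [← pow_succ', show h - 1 + 1 = h by omega, hz]
  rw [hcast]
  -- useful nat pow splittings
  have hpowsplit : 2 ^ (h - 1) = 2 * 2 ^ (h - 2) := by rw [← pow_succ']; congr 1; omega
  have hpow1 : 2 ^ h = 2 * 2 ^ (h - 1) := by rw [← pow_succ']; congr 1; omega
  have hpow4 : 2 ^ h = 4 * 2 ^ (h - 2) := by
    rw [show (4 : ℕ) = 2 ^ 2 by norm_num, ← pow_add]; congr 1; omega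
  constructor
  · intro hy
    set v := y.val with hv
    have hyv : ((v : ℕ) : ZMod (2 ^ h)) = y := ZMod.natCast_rightInverse y
    have hmod : v * v % 2 ^ h = 1 := by
      have : (y * y).val = (1 : ZMod (2 ^ h)).val := by rw [← sq, hy]
      rwa [ZMod.val_mul, ZMod.val_one] at this
    have ht : v * v = 2 ^ h * (v * v / 2 ^ h) + 1 := by
      conv_lhs => rw [← Nat.div_add_mod (v * v) (2 ^ h)]
      rw [hmod]
    set t := v * v / 2 ^ h with htdef
    clear_value t
    have hvodd : v % 2 = 1 := by
      rcases Nat.even_or_odd v with he | ho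
      · exfalso
        have h1 : Even (v * v) := he.mul_right v
        have h2 : Even (2 ^ h * t) :=
          (((Nat.even_pow).mpr ⟨even_two, by omega⟩).mul_right t)
        rw [ht, Nat.even_add_one] at h1
        exact h1 h2
      · exact Nat.odd_iff.mp ho
    have hvw : v = 2 * (v / 2) + 1 := by omega
    set w := v / 2 with hwdef
    clear_value w
    have hvv : v * v = 4 * (w * (w + 1)) + 1 := by rw [hvw]; ring
    have hwwt : w * (w + 1) = 2 ^ (h - 2) * t := by
      have h4 : 4 * (w * (w + 1)) = 4 * (2 ^ (h - 2) * t) := by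
        rw [← Nat.add_right_cancel_iff (n := 1), ← hvv, ht, hpow4]; ring
      exact Nat.eq_of_mul_eq_mul_left (by norm_num) h4
    have hww : 2 ^ (h - 2) ∣ w * (w + 1) := ⟨t, hwwt⟩
    have hcop2 : ∀ m : ℕ, m % 2 = 1 → Nat.Coprime (2 ^ (h - 2)) m := fun m hm =>
      Nat.Coprime.pow_left _ ((Nat.Prime.coprime_iff_not_dvd Nat.prime_two).mpr (by omega))
    have key : 2 ^ (h - 2) ∣ w ∨ 2 ^ (h - 2) ∣ (w + 1) := by
      rcases Nat.even_or_odd w with he | ho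
      · exact Or.inl (Nat.Coprime.dvd_of_dvd_mul_right
          (hcop2 (w + 1) (by obtain ⟨c, hc⟩ := he; omega)) hww)
      · exact Or.inr (Nat.Coprime.dvd_of_dvd_mul_left
          (hcop2 w (by obtain ⟨c, hc⟩ := ho; omega)) hww)
    rcases key with ⟨s, hs⟩ | ⟨s, hs⟩
    · have hv' : v = 2 ^ (h - 1) * s + 1 := by rw [hvw, hs, hpowsplit]; ring
      rcases Nat.even_or_odd s with ⟨q, hq⟩ | ⟨q, hq⟩
      · left
        have hvq : v = 2 ^ h * q + 1 := by rw [hv', hq, hpow1]; ring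
        rw [← hyv, hvq]
        push_cast
        linear_combination (q : ZMod (2 ^ h)) * hz
      · right; right; left
        have hvq : v = 2 ^ h * q + 2 ^ (h - 1) + 1 := by rw [hv', hq, hpow1]; ring
        rw [← hyv, hvq]
        push_cast
        linear_combination (q : ZMod (2 ^ h)) * hz
    · have hv' : v + 1 = 2 ^ (h - 1) * s := by
        calc v + 1 = 2 * (w + 1) := by omega
        _ = 2 * (2 ^ (h - 2) * s) := by rw [hs]
        _ = 2 ^ (h - 1) * s := by rw [hpowsplit]; ring
      rcases Nat.even_or_odd s with ⟨q, hq⟩ | ⟨q, hq⟩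
      · right; left
        have hvq : v + 1 = 2 ^ h * q := by rw [hv', hq, hpow1]; ring
        have hcv : ((v + 1 : ℕ) : ZMod (2 ^ h)) = 0 := by
          rw [hvq]; push_cast; linear_combination (q : ZMod (2 ^ h)) * hz
        push_cast at hcv
        rw [← hyv]; linear_combination hcv
      · right; right; right
        have hvq : v + 1 = 2 ^ h * q + 2 ^ (h - 1) := by rw [hv', hq, hpow1]; ring
        have hcv : ((v + 1 : ℕ) : ZMod (2 ^ h)) = (2 : ZMod (2 ^ h)) ^ (h - 1) := by
          rw [hvq]; push_cast; linear_combination (q : ZMod (2 ^ h)) * hz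
        push_cast at hcv
        rw [← hyv]; linear_combination hcv
  · rintro (rfl | rfl | rfl | rfl)
    · ring
    · ring
    · linear_combination hzz + hz2
    · linear_combination hzz - hz2

lemma card_sqrt_one (h : ℕ) (hh : 3 ≤ h) :
    Nat.card {y : ZMod (2 ^ h) // y ^ 2 = 1} = 4 := by
  haveI : NeZero (2 ^ h) := ⟨by positivity⟩
  have hp1 : 2 ^ h = 2 * 2 ^ (h - 1) := by rw [← pow_succ']; congr 1; omega
  have hp2 : (4 : ℕ) ≤ 2 ^ (h - 1) := by
    calc (4:ℕ) = 2 ^ 2 := by norm_num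
    _ ≤ 2 ^ (h - 1) := Nat.pow_le_pow_right (by norm_num) (by omega)
  have hne : ∀ m1 m2 : ℕ, m1 < 2 ^ h → m2 < 2 ^ h → m1 ≠ m2 →
      ((m1 : ZMod (2 ^ h)) ≠ (m2 : ZMod (2 ^ h))) := by
    intro m1 m2 h1 h2 hne he
    exact hne (by rw [← ZMod.val_cast_of_lt h1, ← ZMod.val_cast_of_lt h2, he])
  classical
  rw [Nat.card_eq_fintype_card, Fintype.card_subtype]
  have key : (Finset.univ.filter (fun y : ZMod (2 ^ h) => y ^ 2 = 1)) =
      {((1 : ℕ) : ZMod (2 ^ h)), ((2 ^ h - 1 : ℕ) : ZMod (2 ^ h)),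
       ((2 ^ (h - 1) + 1 : ℕ) : ZMod (2 ^ h)), ((2 ^ (h - 1) - 1 : ℕ) : ZMod (2 ^ h))} := by
    have e1 : ((1 : ℕ) : ZMod (2 ^ h)) = 1 := by push_cast; rfl
    have hz : (2 : ZMod (2 ^ h)) ^ h = 0 := by
      have := ZMod.natCast_self (2 ^ h); push_cast at this; exact this
    have e2 : ((2 ^ h - 1 : ℕ) : ZMod (2 ^ h)) = -1 := by
      push_cast [Nat.cast_sub (Nat.one_le_two_pow : 1 ≤ 2 ^ h)]
      rw [hz]; ring
    have e3 : ((2 ^ (h - 1) + 1 : ℕ) : ZMod (2 ^ h)) = ((2 ^ (h - 1) : ℕ) : ZMod (2 ^ h)) + 1 := by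
      push_cast; ring
    have e4 : ((2 ^ (h - 1) - 1 : ℕ) : ZMod (2 ^ h)) = ((2 ^ (h - 1) : ℕ) : ZMod (2 ^ h)) - 1 := by
      push_cast [Nat.cast_sub (Nat.one_le_two_pow : 1 ≤ 2 ^ (h - 1))]; ring
    ext y
    simp only [Finset.mem_filter, Finset.mem_univ, true_and, Finset.mem_insert,
      Finset.mem_singleton, e1, e2, e3, e4]
    exact sq_eq_one_iff' h hh y
  rw [key]
  rw [Finset.card_insert_of_notMem (by
      simp only [Finset.mem_insert, Finset.mem_singleton]
      push_neg
      exact ⟨hne _ _ (by omega) (by omega) (by omega),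
        hne _ _ (by omega) (by omega) (by omega),
        hne _ _ (by omega) (by omega) (by omega)⟩),
    Finset.card_insert_of_notMem (by
      simp only [Finset.mem_insert, Finset.mem_singleton]
      push_neg
      exact ⟨hne _ _ (by omega) (by omega) (by omega),
        hne _ _ (by omega) (by omega) (by omega)⟩),
    Finset.card_insert_of_notMem (by
      simp only [Finset.mem_singleton]
      exact hne _ _ (by omega) (by omega) (by omega)),
    Finset.card_singleton]

lemma card_image_sq (h : ℕ) (hh : 3 ≤ h) :
    (Finset.univ.image (fun u : (ZMod (2 ^ h))ˣ => ((u : ZMod (2 ^ h)) ^ 2))).card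
      = 2 ^ (h - 3) := by
  haveI : NeZero (2 ^ h) := ⟨by positivity⟩
  classical
  set G := (ZMod (2 ^ h))ˣ
  set f : G →* G := powMonoidHom 2 with hf
  -- kernel has 4 elements
  have hker : Nat.card f.ker = 4 := by
    have e1 : f.ker ≃ {x : G // x ^ 2 = 1} :=
      Equiv.subtypeEquivRight (fun x => by
        simp [hf, MonoidHom.mem_ker, powMonoidHom_apply])
    have e2 : {x : G // x ^ 2 = 1} ≃ {y : ZMod (2 ^ h) // y ^ 2 = 1} :=
      { toFun := fun x => ⟨(x.1 : ZMod (2 ^ h)), by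
          rw [← Units.val_pow_eq_pow_val, x.2, Units.val_one]⟩
        invFun := fun y => ⟨⟨y.1, y.1, by rw [← sq]; exact y.2, by rw [← sq]; exact y.2⟩,
          Units.ext (by rw [Units.val_pow_eq_pow_val]; exact y.2)⟩
        left_inv := fun x => Subtype.ext (Units.ext rfl)
        right_inv := fun y => Subtype.ext rfl }
    rw [Nat.card_congr (e1.trans e2), card_sqrt_one h hh]
  have hG : Nat.card G = 2 ^ (h - 1) := by
    rw [Nat.card_eq_fintype_card, ZMod.card_units_eq_totient,
      Nat.totient_prime_pow Nat.prime_two (by omega : 0 < h)]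
    simp
  have hquot : Nat.card G = Nat.card (G ⧸ f.ker) * Nat.card f.ker :=
    Subgroup.card_eq_card_quotient_mul_card_subgroup f.ker
  have hrange : Nat.card f.range = Nat.card (G ⧸ f.ker) :=
    (Nat.card_congr (QuotientGroup.quotientKerEquivRange f).toEquiv).symm
  -- identify the finset image with the range of f
  have himg : (Finset.univ.image (fun u : G => ((u : ZMod (2 ^ h)) ^ 2)))
      = (Finset.univ.image (fun u : G => u ^ 2)).image (Units.val) := by
    rw [Finset.image_image]
    apply Finset.image_congr
    intro u _
    exact (Units.val_pow_eq_pow_val u 2).symm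
  rw [himg, Finset.card_image_of_injective _ Units.val_injective]
  have hcard : (Finset.univ.image (fun u : G => u ^ 2)).card = Nat.card f.range := by
    rw [← Set.ncard_coe_finset, ← Nat.card_coe_set_eq]
    apply Nat.card_congr
    apply Equiv.setCongr
    show (↑(Finset.univ.image (fun u : G => u ^ 2)) : Set G) = (f.range : Set G)
    ext x
    simp [hf, powMonoidHom_apply, eq_comm]
  rw [hcard]
  -- arithmetic
  have harith : 2 ^ (h - 1) = 2 ^ (h - 3) * 4 := by
    rw [show h - 1 = h - 3 + 2 by omega, pow_add]; norm_num
  have : Nat.card ↥f.range * 4 = 2 ^ (h - 3) * 4 := by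
    rw [hrange, ← hker, ← hquot, hG, harith, hker]
  exact Nat.eq_of_mul_eq_mul_right (by norm_num) this

/-- For `h > 2`, the eigenvalue of `G_{2^h}` indexed by `a = 2^{h-3}` equals
`2^h/(4√2)`, which is irrational; hence `G_{2^h}` is not integral. -/
theorem stmt_12 (h : ℕ) (hh : 2 < h)
    (a : ZMod (2 ^ h)) (ha : a = ((2 ^ (h - 3) : ℕ) : ZMod (2 ^ h)))
    (chi : ℂ)
    (hchi : chi = ∑ b ∈ Finset.univ.image (fun u : (ZMod (2 ^ h))ˣ => ((u : ZMod (2 ^ h)) ^ 2)),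
        Complex.exp (2 * Real.pi * Complex.I * (a.val : ℂ) * (b.val : ℂ) / (2 ^ h : ℂ))) :
    chi + (starRingEnd ℂ) chi = (((2 ^ h : ℝ) / (4 * Real.sqrt 2) : ℝ) : ℂ) ∧
    Irrational ((2 ^ h : ℝ) / (4 * Real.sqrt 2)) := by
  have h3 : 3 ≤ h := hh
  haveI : NeZero (2 ^ h) := ⟨by positivity⟩
  set E := Complex.exp (Real.pi * Complex.I / 4) with hE
  have haval : a.val = 2 ^ (h - 3) := by
    rw [ha, ZMod.val_cast_of_lt]
    exact Nat.pow_lt_pow_right (by norm_num) (by omega)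
  have h2c : (2 : ℂ) ^ h = 2 ^ (h - 3) * 8 := by
    rw [show h = h - 3 + 3 by omega, pow_add]
    norm_num
  have hne2 : (2 : ℂ) ^ h ≠ 0 := pow_ne_zero _ two_ne_zero
  have hterm : ∀ b ∈ Finset.univ.image (fun u : (ZMod (2 ^ h))ˣ => ((u : ZMod (2 ^ h)) ^ 2)),
      Complex.exp (2 * Real.pi * Complex.I * (a.val : ℂ) * (b.val : ℂ) / (2 ^ h : ℂ)) = E := by
    intro b hb
    obtain ⟨u, -, hu⟩ := Finset.mem_image.mp hb
    have h8 : b.val % 8 = 1 := by rw [← hu]; exact sq_unit_val_mod_eight h h3 u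
    obtain ⟨k, hk⟩ : ∃ k, b.val = 8 * k + 1 := ⟨b.val / 8, by omega⟩
    rw [haval, hk]
    push_cast
    have harg : 2 * (Real.pi : ℂ) * Complex.I * (2 : ℂ) ^ (h - 3) * (8 * (k : ℂ) + 1) / (2 : ℂ) ^ h
        = (k : ℂ) * (2 * Real.pi * Complex.I) + Real.pi * Complex.I / 4 := by
      rw [div_eq_iff hne2, h2c]
      ring
    rw [harg, Complex.exp_add, Complex.exp_nat_mul_two_pi_mul_I, one_mul]
  have hSum : chi = (2 ^ (h - 3) : ℕ) • E := by
    rw [hchi, Finset.sum_congr rfl hterm, Finset.sum_const, card_image_sq h h3]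
  have hEconj : E + (starRingEnd ℂ) E = ((Real.sqrt 2 : ℝ) : ℂ) := by
    rw [Complex.add_conj]
    have hE4 : E = Complex.exp ((Real.pi / 4 : ℝ) * Complex.I) := by
      rw [hE]; congr 1; push_cast; ring
    rw [hE4, Complex.exp_ofReal_mul_I_re, Real.cos_pi_div_four]
    push_cast
    ring
  have hreal : (2 ^ h : ℝ) / (4 * Real.sqrt 2) = (2 : ℝ) ^ (h - 3) * Real.sqrt 2 := by
    have hsq : Real.sqrt 2 * Real.sqrt 2 = 2 := Real.mul_self_sqrt (by norm_num)
    have h2r : (2 : ℝ) ^ h = 2 ^ (h - 3) * 8 := by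
      rw [show h = h - 3 + 3 by omega, pow_add]; norm_num
    rw [div_eq_iff (by positivity), h2r]
    linear_combination (-4 * (2 : ℝ) ^ (h - 3)) * hsq
  constructor
  · rw [hSum, nsmul_eq_mul, map_mul, map_natCast, ← mul_add, hEconj, hreal]
    push_cast
    ring
  · rw [hreal]
    have := irrational_sqrt_two.natCast_mul (m := 2 ^ (h - 3)) (by positivity)
    push_cast at this
    exact this
end

section
/- Let p be a prime with p ≡ 1 (mod 4) and n = 2p. Define λ_0 = (p-1)/2, and for nonzero even r let λ_r ∈ {(−1+√p)/2, (−1−√p)/2}, for odd r ≠ p let λ_r ∈ {(1−√p)/2, (1+√p)/2}, and λ_p = (1−p)/2 (these are the eigenvalues of G_{2p}). If integers ℓ_1, ..., ℓ_{n-1} satisfy Σ_{r=1}^{n-1} ℓ_r (λ_r − λ_0) = 0, then p divides Σ_{r odd} ℓ_r; in particular Σ_{r odd} ℓ_r ≠ ±1. -/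
/-- For `p ≡ 1 (mod 4)` prime and `n = 2p`, with the eigenvalues of `G_{2p}` as listed,
any integers `ℓ_1, ..., ℓ_{n-1}` with `Σ ℓ_r (λ_r - λ_0) = 0` satisfy
`p ∣ Σ_{r odd} ℓ_r`; in particular this sum is not `±1`. -/
theorem stmt_15 (p : ℕ) (hp : p.Prime) (h1 : p % 4 = 1) (n : ℕ) (hn : n = 2 * p)
    (lam : ℕ → ℝ)
    (h0 : lam 0 = ((p : ℝ) - 1) / 2)
    (hpp : lam p = (1 - (p : ℝ)) / 2)
    (heven : ∀ r, 0 < r → r < n → r % 2 = 0 →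
      lam r = (-1 + Real.sqrt p) / 2 ∨ lam r = (-1 - Real.sqrt p) / 2)
    (hoddr : ∀ r, r < n → r % 2 = 1 → r ≠ p →
      lam r = (1 - Real.sqrt p) / 2 ∨ lam r = (1 + Real.sqrt p) / 2)
    (ℓ : ℕ → ℤ)
    (hsum : ∑ r ∈ Finset.Ico 1 n, (ℓ r : ℝ) * (lam r - lam 0) = 0) :
    (p : ℤ) ∣ (∑ r ∈ (Finset.Ico 1 n).filter (fun r => r % 2 = 1), ℓ r) ∧
    (∑ r ∈ (Finset.Ico 1 n).filter (fun r => r % 2 = 1), ℓ r) ≠ 1 ∧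
    (∑ r ∈ (Finset.Ico 1 n).filter (fun r => r % 2 = 1), ℓ r) ≠ -1 := by
  have hp2 : 2 ≤ p := hp.two_le
  have hpodd : p % 2 = 1 := by omega
  set c : ℕ → ℤ := fun r =>
    (if r % 2 = 1 then (2:ℤ) else 0) - (p:ℤ) * (if r = p then 2 else 1) with hc
  have key : ∀ r, ∃ e : ℤ, r ∈ Finset.Ico 1 n →
      lam r - lam 0 = (((c r : ℤ) : ℝ) + (e : ℝ) * Real.sqrt p) / 2 := by
    intro r
    by_cases hmem : r ∈ Finset.Ico 1 n
    · rw [Finset.mem_Ico] at hmem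
      by_cases hrp : r = p
      · refine ⟨0, fun _ => ?_⟩
        subst hrp
        simp only [hc, hpodd, if_pos rfl, if_true]
        rw [hpp, h0]
        push_cast
        ring
      · rcases Nat.mod_two_eq_zero_or_one r with hev | hodd
        · have hr := heven r (by omega) hmem.2 hev
          rcases hr with h | h
          · refine ⟨1, fun _ => ?_⟩
            simp only [hc, hev, if_neg hrp]
            rw [h, h0]
            push_cast
            ring_nf
          · refine ⟨-1, fun _ => ?_⟩
            simp only [hc, hev, if_neg hrp]
            rw [h, h0]
            push_cast
            ring_nf
        · have hr := hoddr r hmem.2 hodd hrp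
          rcases hr with h | h
          · refine ⟨-1, fun _ => ?_⟩
            simp only [hc, hodd, if_neg hrp, if_pos rfl]
            rw [h, h0]
            push_cast
            ring
          · refine ⟨1, fun _ => ?_⟩
            simp only [hc, hodd, if_neg hrp, if_pos rfl]
            rw [h, h0]
            push_cast
            ring
    · exact ⟨0, fun h => absurd h hmem⟩
  choose e he using key
  set A : ℤ := ∑ r ∈ Finset.Ico 1 n, ℓ r * c r with hA
  set B : ℤ := ∑ r ∈ Finset.Ico 1 n, ℓ r * e r with hB
  have h2 : (A : ℝ) + (B : ℝ) * Real.sqrt p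
      = 2 * ∑ r ∈ Finset.Ico 1 n, (ℓ r : ℝ) * (lam r - lam 0) := by
    rw [hA, hB]
    push_cast
    rw [Finset.sum_mul, Finset.mul_sum, ← Finset.sum_add_distrib]
    apply Finset.sum_congr rfl
    intro r hr
    rw [he r hr]
    ring
  rw [hsum] at h2
  have hirr : Irrational (Real.sqrt p) := hp.irrational_sqrt
  have hB0 : B = 0 := by
    by_contra hB0
    have hBne : (B : ℝ) ≠ 0 := Int.cast_ne_zero.mpr hB0
    have hq : ((((-A : ℚ) / (B : ℚ)) : ℚ) : ℝ) = Real.sqrt p := by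
      push_cast
      field_simp
      linarith
    exact hirr ⟨(-A : ℚ) / (B : ℚ), hq⟩
  have hA0 : A = 0 := by
    have : (A : ℝ) = 0 := by
      rw [hB0] at h2; push_cast at h2; linarith
    exact_mod_cast this
  set S : ℤ := ∑ r ∈ (Finset.Ico 1 n).filter (fun r => r % 2 = 1), ℓ r with hS
  set T : ℤ := ∑ r ∈ Finset.Ico 1 n, ℓ r with hT
  have hpI : p ∈ Finset.Ico 1 n := by
    rw [Finset.mem_Ico]; omega
  have e1 : ∑ r ∈ Finset.Ico 1 n, ℓ r * (if r % 2 = 1 then (2:ℤ) else 0)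
      = 2 * S := by
    rw [hS, Finset.mul_sum, Finset.sum_filter]
    apply Finset.sum_congr rfl
    intro r _
    split <;> ring
  have e2 : ∑ r ∈ Finset.Ico 1 n, ℓ r * ((p:ℤ) * (if r = p then 2 else 1))
      = (p:ℤ) * T + (p:ℤ) * ℓ p := by
    have : ∀ r ∈ Finset.Ico 1 n,
        ℓ r * ((p:ℤ) * (if r = p then 2 else 1))
          = (p:ℤ) * ℓ r + (if r = p then (p:ℤ) * ℓ r else 0) := by
      intro r _
      split <;> ring
    rw [Finset.sum_congr rfl this, Finset.sum_add_distrib,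
      Finset.sum_ite_eq' (Finset.Ico 1 n) p (fun r => (p:ℤ) * ℓ r),
      if_pos hpI, hT, Finset.mul_sum]
  have hAval : A = 2 * S - ((p:ℤ) * T + (p:ℤ) * ℓ p) := by
    rw [hA]
    simp only [hc, mul_sub]
    rw [Finset.sum_sub_distrib, e1, e2]
  have hdvd2S : (p : ℤ) ∣ 2 * S := ⟨T + ℓ p, by linear_combination hA0 - hAval⟩
  have hprime : Prime (p : ℤ) := Nat.prime_iff_prime_int.mp hp
  have hdvdS : (p : ℤ) ∣ S := by
    rcases hprime.dvd_mul.mp hdvd2S with h | h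
    · exfalso
      have h' : p ∣ 2 := by exact_mod_cast h
      have := Nat.le_of_dvd (by norm_num) h'
      omega
    · exact h
  refine ⟨hdvdS, ?_, ?_⟩
  · intro hS1
    rw [hS1] at hdvdS
    have := Int.le_of_dvd one_pos hdvdS
    omega
  · intro hS1
    rw [hS1] at hdvdS
    have : (p : ℤ) ∣ 1 := (dvd_neg.mp hdvdS)
    have := Int.le_of_dvd one_pos this
    omega
end
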